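/- Let μ be a Borel probability measure on a metric space M, let r > 0, and let F ⊆ M be a finite set such that the support of μ is contained in ⋃_{f ∈ F} B(f, r/2), where B(x, ρ) denotes the closed ball of radius ρ centered at x. Then ∫ 1/μ(B(u, r)) dμ(u) ≤ |F|. In particular, if the support of μ admits an (r/2)-cover of size N(r/2), then E_{U∼μ}[ 1/μ(B(U, r)) ] ≤ N(r/2). -/

import Mathlib

open MeasureTheory Metric
open scoped ENNReal

/-- If the support of a Borel probability measure `μ` on a metric space is contained in the
union of the closed balls of radius `r/2` centered at the points of a finite set `F` (i.e. `μ`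
vanishes outside this closed union), then `∫ 1/μ(B(u, r)) dμ(u) ≤ |F|`. In particular, if the
support of `μ` admits an `(r/2)`-cover of size `N`, then `E_{U∼μ}[1/μ(B(U, r))] ≤ N`. -/
theorem integral_inv_measure_ball_le_covering_number
    {M : Type*} [MetricSpace M] [MeasurableSpace M] [OpensMeasurableSpace M]
    (μ : Measure M) [IsProbabilityMeasure μ] (r : ℝ) (hr : 0 < r)
    (F : Finset M)
    (hsupp : μ ((⋃ f ∈ F, closedBall f (r / 2))ᶜ) = 0) :
    ∫⁻ u, (μ (closedBall u r))⁻¹ ∂μ ≤ F.card := by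
  have hrestrict : μ.restrict (⋃ f ∈ F, closedBall f (r / 2)) = μ :=
    Measure.restrict_eq_self_of_ae_mem (by
      rw [ae_iff]
      convert hsupp using 2
      rfl)
  calc ∫⁻ u, (μ (closedBall u r))⁻¹ ∂μ
      = ∫⁻ u in ⋃ f ∈ F, closedBall f (r / 2), (μ (closedBall u r))⁻¹ ∂μ := by
        rw [hrestrict]
    _ = ∫⁻ u in ⋃ f : (F : Set M), closedBall (f : M) (r / 2), (μ (closedBall u r))⁻¹ ∂μ := by
        simp only [← Finset.mem_coe, Set.biUnion_eq_iUnion]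
    _ ≤ ∑' f : (F : Set M), ∫⁻ u in closedBall (f : M) (r / 2), (μ (closedBall u r))⁻¹ ∂μ :=
        lintegral_iUnion_le _ _
    _ = ∑ f ∈ F, ∫⁻ u in closedBall f (r / 2), (μ (closedBall u r))⁻¹ ∂μ :=
        Finset.tsum_subtype' F fun f => ∫⁻ u in closedBall f (r / 2), (μ (closedBall u r))⁻¹ ∂μ
    _ ≤ ∑ f ∈ F, 1 := by
        refine Finset.sum_le_sum fun f _ => ?_
        have h1 : ∫⁻ u in closedBall f (r / 2), (μ (closedBall u r))⁻¹ ∂μ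
            ≤ ∫⁻ _ in closedBall f (r / 2), (μ (closedBall f (r / 2)))⁻¹ ∂μ := by
          refine setLIntegral_mono_ae (by fun_prop) (ae_of_all _ fun u hu => ?_)
          refine ENNReal.inv_le_inv.mpr (measure_mono fun x hx => ?_)
          have : dist x u ≤ r := by
            calc dist x u ≤ dist x f + dist f u := dist_triangle _ _ _
              _ ≤ r / 2 + r / 2 := add_le_add (mem_closedBall.mp hx)
                  (by rw [dist_comm]; exact mem_closedBall.mp hu)
              _ = r := by ring
          exact mem_closedBall.mpr this
        have h2 : ∫⁻ _ in closedBall f (r / 2), (μ (closedBall f (r / 2)))⁻¹ ∂μ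
            = (μ (closedBall f (r / 2)))⁻¹ * μ (closedBall f (r / 2)) := by
          rw [setLIntegral_const]
        calc _ ≤ _ := h1
          _ = _ := h2
          _ ≤ 1 := ENNReal.inv_mul_le_one _
    _ = F.card := by simp
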